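/- For a finitely generated group Γ, the following are equivalent: (2') there exist a commutative unital ring R, an integer n ≥ 1 and a group homomorphism Γ → GL_n(R) whose image is infinite; (3') there exist a field K, an integer n ≥ 1 and a group homomorphism Γ → GL_n(K) whose image is infinite. -/

import Mathlib

open scoped DirectSum

/-- A finitely generated infinite commutative group admits a homomorphism to `ℚˣ`
with infinite image. -/
lemma CommGroup.exists_monoidHom_units_rat_infinite_range
    (A : Type*) [CommGroup A] [Group.FG A] [Infinite A] :
    ∃ ψ : A →* ℚˣ, Infinite ↥ψ.range := by
  classical
  obtain ⟨n, ι, fι, p, hp, e, ⟨eq⟩⟩ :=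
    AddCommGroup.equiv_free_prod_directSum_zmod (Additive A)
  -- the torsion part is finite
  haveI : ∀ i, NeZero (p i ^ e i) := fun i => ⟨pow_ne_zero _ (hp i).ne_zero⟩
  haveI : Finite (⨁ i : ι, ZMod (p i ^ e i)) :=
    Finite.of_equiv _ (DFinsupp.equivFunOnFintype).symm
  have hn : 0 < n := by
    by_contra h
    push_neg at h
    interval_cases n
    haveI : Finite (Fin 0 →₀ ℤ) := Finite.of_equiv _ Finsupp.equivFunOnFinite.symm
    haveI : Finite (Additive A) := Finite.of_equiv _ eq.symm.toEquiv
    haveI := Finite.of_equiv (Additive A) Additive.toMul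
    exact not_finite A
  set i0 : Fin n := ⟨0, hn⟩
  -- coordinate map to ℤ
  let χ : A → ℤ := fun a => (eq (Additive.ofMul a)).1 i0
  have hχ : ∀ a b : A, χ (a * b) = χ a + χ b := by
    intro a b
    show (eq (Additive.ofMul a + Additive.ofMul b)).1 i0 = _
    rw [map_add]
    rfl
  have hχs : Function.Surjective χ := by
    intro z
    refine ⟨Additive.toMul (eq.symm (Finsupp.single i0 z, 0)), ?_⟩
    show (eq (eq.symm _)).1 i0 = z
    rw [AddEquiv.apply_symm_apply]
    exact Finsupp.single_eq_same
  let u : ℚˣ := Units.mk0 (2 : ℚ) two_ne_zero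
  refine ⟨{ toFun := fun a => u ^ χ a
            map_one' := by
              have : χ 1 + χ 1 = χ 1 := by rw [← hχ]; simp
              have h1 : χ 1 = 0 := by omega
              simp [h1]
            map_mul' := fun a b => by simp [hχ, zpow_add] }, ?_⟩
  have hinj : Function.Injective fun z : ℤ => u ^ z := by
    intro a b h
    have : ((2:ℚ)) ^ a = (2:ℚ) ^ b := by
      have := congrArg (Units.val) h
      simpa [u] using this
    exact zpow_right_injective₀ (by norm_num) (by norm_num) this
  set ψ : A →* ℚˣ := { toFun := fun a => u ^ χ a, map_one' := _, map_mul' := _ }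
  refine Infinite.of_injective (fun z : ℤ => (⟨u ^ z, ?_⟩ : ↥ψ.range)) ?_
  · obtain ⟨a, ha⟩ := hχs z
    exact ⟨a, by simp [ψ, ha]⟩
  · intro a b h
    exact hinj (congrArg Subtype.val h)


open Matrix

/-- Induced representation: if a finite-index subgroup `H` of `Γ` has a homomorphism to
`ℚˣ` with infinite image, then `Γ` has a finite-dimensional representation over `ℚ` with
infinite image. -/
lemma exists_glq_of_finiteIndex_units {Γ : Type} [Group Γ] (H : Subgroup Γ)
    [H.FiniteIndex] (ρ : ↥H →* ℚˣ) (hρ : Infinite ↥ρ.range) :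
    ∃ m : ℕ, 1 ≤ m ∧ ∃ π : Γ →* Matrix.GeneralLinearGroup (Fin m) ℚ, Infinite ↥π.range := by
  classical
  haveI : Finite (Γ ⧸ H) := H.finite_quotient_of_finiteIndex
  haveI : Fintype (Γ ⧸ H) := Fintype.ofFinite _
  set ι := Γ ⧸ H
  set m := Fintype.card ι with hm
  have hm1 : 1 ≤ m := Fintype.card_pos
  set e : ι ≃ Fin m := Fintype.equivFin ι with he
  -- membership lemma
  have mem : ∀ (g : Γ) (x y : ι), g • y = x → (x.out)⁻¹ * g * y.out ∈ H := by
    intro g x y h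
    have h1 : (QuotientGroup.mk (g * y.out) : Γ ⧸ H) = QuotientGroup.mk x.out := by
      rw [← smul_eq_mul, MulAction.Quotient.mk_smul_out, h, QuotientGroup.out_eq']
    have := QuotientGroup.eq.mp h1.symm
    rwa [← mul_assoc] at this
  -- entries of the induced representation
  set a : Γ → ι → ι → ℚ := fun g x y =>
    if h : g • y = x then ((ρ ⟨(x.out)⁻¹ * g * y.out, mem g x y h⟩ : ℚˣ) : ℚ) else 0 with ha
  have hzero : ∀ (g : Γ) (x y : ι), ¬(g • y = x) → a g x y = 0 := by
    intro g x y h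
    simp only [ha]
    rw [dif_neg h]
  have hval : ∀ (g : Γ) (x y : ι) (h : g • y = x),
      a g x y = ((ρ ⟨(x.out)⁻¹ * g * y.out, mem g x y h⟩ : ℚˣ) : ℚ) := by
    intro g x y h
    simp only [ha]
    rw [dif_pos h]
  have hmul : ∀ (g h : Γ) (x z : ι),
      a (g * h) x z = ∑ y : ι, a g x y * a h y z := by
    intro g h x z
    rw [Finset.sum_eq_single (h • z)]
    · by_cases hc2 : g • (h • z) = x
      · have hgz : (g * h) • z = x := by rw [mul_smul]; exact hc2
        rw [hval _ _ _ hgz, hval _ _ _ hc2, hval _ _ _ rfl, ← Units.val_mul, ← _root_.map_mul]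
        refine congrArg (fun u : ℚˣ => (u : ℚ)) (congrArg ρ (Subtype.ext ?_))
        simp only [Subgroup.coe_mul]
        group
      · have hgz : ¬((g * h) • z = x) := by rw [mul_smul]; exact hc2
        rw [hzero _ _ _ hgz, hzero _ _ _ hc2, zero_mul]
    · intro y _ hy
      rw [hzero h y z (fun hh => hy hh.symm), mul_zero]
    · intro hmem
      exact absurd (Finset.mem_univ _) hmem
  have hone : ∀ x y : ι, a 1 x y = (1 : Matrix ι ι ℚ) x y := by
    intro x y
    rw [Matrix.one_apply]
    by_cases h : y = x
    · subst h
      have h1 : (1 : Γ) • y = y := one_smul _ _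
      rw [hval _ _ _ h1, if_pos rfl]
      have : (⟨(y.out)⁻¹ * 1 * y.out, mem 1 y y h1⟩ : ↥H) = 1 := Subtype.ext (by simp)
      rw [this]
      simp
    · have h1 : ¬((1 : Γ) • y = x) := by rwa [one_smul]
      rw [hzero _ _ _ h1, if_neg (fun hh => h hh.symm)]
  -- the monoid hom into the matrix ring
  set M : Γ →* Matrix ι ι ℚ :=
    { toFun := fun g => Matrix.of (a g)
      map_one' := by ext x y; exact hone x y
      map_mul' := fun g h => by ext x z; exact hmul g h x z } with hM
  set π' : Γ →* (Matrix ι ι ℚ)ˣ := M.toHomUnits with hπ'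
  -- reindex to Fin m
  set re : Matrix ι ι ℚ ≃+* Matrix (Fin m) (Fin m) ℚ :=
    (Matrix.reindexAlgEquiv ℚ ℚ e).toRingEquiv with hre
  set π : Γ →* Matrix.GeneralLinearGroup (Fin m) ℚ :=
    (Units.mapEquiv re.toMulEquiv).toMonoidHom.comp π' with hπ
  refine ⟨m, hm1, π, ?_⟩
  -- the distinguished coset and its representative
  set x0 : ι := QuotientGroup.mk (1 : Γ) with hx0
  have ht : x0.out ∈ H := by
    have := QuotientGroup.eq.mp (QuotientGroup.out_eq' x0)
    simpa [hx0] using this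
  set t : ↥H := ⟨x0.out, ht⟩ with htt
  have key : ∀ h : ↥H, ((π (h : Γ) : Matrix (Fin m) (Fin m) ℚ)) (e x0) (e x0)
      = ((ρ (t⁻¹ * h * t) : ℚˣ) : ℚ) := by
    intro h
    have hfix : (h : Γ) • x0 = x0 := by
      rw [hx0]
      refine (MulAction.Quotient.smul_mk H _ _).trans (QuotientGroup.eq.mpr ?_)
      simpa using H.inv_mem h.2
    have hentry : ((π (h : Γ) : Matrix (Fin m) (Fin m) ℚ)) (e x0) (e x0)
        = a (h : Γ) x0 x0 := by
      simp [hπ, hre, hπ', hM, Matrix.reindexAlgEquiv_apply, Matrix.reindex_apply,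
        Matrix.submatrix_apply]
    rw [hentry, hval _ _ _ hfix]
    refine congrArg (fun u : ℚˣ => (u : ℚ)) (congrArg ρ (Subtype.ext ?_))
    simp [htt]
  -- conjugation by t is surjective on H
  have hconj : Function.Surjective (fun h : ↥H => t⁻¹ * h * t) := by
    intro k
    exact ⟨t * k * t⁻¹, by group⟩
  -- conclude
  by_contra hfin
  rw [not_infinite_iff_finite] at hfin
  have hfinset : ((π.range : Set (Matrix.GeneralLinearGroup (Fin m) ℚ))).Finite :=
    @Set.toFinite _ _ hfin
  have himg := hfinset.image
    (fun u : Matrix.GeneralLinearGroup (Fin m) ℚ =>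
      ((u : Matrix (Fin m) (Fin m) ℚ) (e x0) (e x0)))
  have hsub : (Units.val '' (Set.range ρ)) ⊆
      ((fun u : Matrix.GeneralLinearGroup (Fin m) ℚ =>
      ((u : Matrix (Fin m) (Fin m) ℚ) (e x0) (e x0))) '' (π.range : Set _)) := by
    rintro q ⟨w, ⟨h, rfl⟩, rfl⟩
    obtain ⟨h', rfl⟩ := hconj h
    refine ⟨π (h' : Γ), ⟨(h' : Γ), rfl⟩, ?_⟩
    simpa using key h'
  have hrange : (Set.range ρ).Infinite := by
    have h1 : ((ρ.range : Set ℚˣ)).Infinite := Set.infinite_coe_iff.mp hρ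
    rwa [MonoidHom.coe_range] at h1
  exact hrange.image (Set.injOn_of_injective Units.val_injective) (himg.subset hsub)


open Matrix

/-- Restrict a representation of a finitely generated group to the subring generated by
the matrix entries (of generators and inverses); yields a Noetherian coefficient ring. -/
lemma exists_noetherian_ring_rep (Γ : Type) [Group Γ] [Group.FG Γ] {n : ℕ} {R : Type}
    [CommRing R] (f : Γ →* Matrix.GeneralLinearGroup (Fin n) R) (hf : Infinite ↥f.range) :
    ∃ (R₀ : Type) (_ : CommRing R₀) (_ : IsNoetherianRing R₀),
      ∃ f₀ : Γ →* Matrix.GeneralLinearGroup (Fin n) R₀, Infinite ↥f₀.range := by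
  classical
  obtain ⟨S, hScl, hSfin⟩ := Group.fg_iff.mp ‹Group.FG Γ›
  -- the set of entries
  set T : Set R := (⋃ s ∈ S, (Set.range fun p : Fin n × Fin n => ((f s : Matrix (Fin n) (Fin n) R)) p.1 p.2) ∪
      (Set.range fun p : Fin n × Fin n => (((f s)⁻¹ : Matrix.GeneralLinearGroup (Fin n) R)) p.1 p.2)) with hT
  have hTfin : T.Finite :=
    Set.Finite.biUnion hSfin (fun s _ => (Set.finite_range _).union (Set.finite_range _))
  set R₀ := Subring.closure T with hR₀
  refine ⟨↥R₀, inferInstance, ?_, ?_⟩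
  · -- Noetherian
    have h1 : (Algebra.adjoin ℤ T).FG := by
      obtain ⟨t, ht⟩ := Set.Finite.exists_finset_coe hTfin
      exact ⟨t, by rw [ht]⟩
    haveI h2 : Algebra.FiniteType ℤ ↥(Algebra.adjoin ℤ T) :=
      (Subalgebra.fg_iff_finiteType _).mp h1
    haveI h3 : Algebra.FiniteType ℤ ↥R₀ :=
      Algebra.FiniteType.equiv h2 (Subring.closureEquivAdjoinInt T).symm
    exact Algebra.FiniteType.isNoetherianRing ℤ ↥R₀
  -- the subgroup of GL with entries (and inverse entries) in R₀
  · set H : Subgroup (Matrix.GeneralLinearGroup (Fin n) R) :=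
      { carrier := {g | (∀ i j, (g : Matrix (Fin n) (Fin n) R) i j ∈ R₀) ∧
          (∀ i j, ((g⁻¹ : Matrix.GeneralLinearGroup (Fin n) R) : Matrix (Fin n) (Fin n) R) i j ∈ R₀)}
        one_mem' := by
          refine ⟨fun i j => ?_, fun i j => ?_⟩
          · rw [Units.val_one, Matrix.one_apply]
            split <;> [exact Subring.one_mem R₀; exact Subring.zero_mem R₀]
          · rw [inv_one, Units.val_one, Matrix.one_apply]
            split <;> [exact Subring.one_mem R₀; exact Subring.zero_mem R₀]
        mul_mem' := by
          rintro g h ⟨hg1, hg2⟩ ⟨hh1, hh2⟩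
          constructor
          · intro i j
            rw [Units.val_mul, Matrix.mul_apply]
            exact Subring.sum_mem _ (fun k _ => Subring.mul_mem _ (hg1 i k) (hh1 k j))
          · intro i j
            rw [_root_.mul_inv_rev, Units.val_mul, Matrix.mul_apply]
            exact Subring.sum_mem _ (fun k _ => Subring.mul_mem _ (hh2 i k) (hg2 k j))
        inv_mem' := by
          rintro g ⟨hg1, hg2⟩
          refine ⟨hg2, ?_⟩
          rw [inv_inv]
          exact hg1 } with hH
    have hfH : ∀ γ : Γ, f γ ∈ H := by
      have : f.range ≤ H := by
        rw [MonoidHom.range_eq_map, ← hScl, MonoidHom.map_closure]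
        refine (Subgroup.closure_le _).mpr ?_
        rintro g ⟨s, hs, rfl⟩
        constructor
        · intro i j
          exact Subring.subset_closure (Set.mem_biUnion hs (Or.inl ⟨(i, j), rfl⟩))
        · intro i j
          exact Subring.subset_closure (Set.mem_biUnion hs (Or.inr ⟨(i, j), rfl⟩))
      exact fun γ => this ⟨γ, rfl⟩
    -- restriction of matrices
    set ι : ↥R₀ →+* R := R₀.subtype with hι
    set Mι : Matrix (Fin n) (Fin n) ↥R₀ →+* Matrix (Fin n) (Fin n) R := ι.mapMatrix with hMι
    have hMιinj : Function.Injective Mι := by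
      intro A B h
      ext i j
      exact congrFun (congrFun h i) j
    set r : ∀ γ : Γ, Matrix (Fin n) (Fin n) ↥R₀ :=
      fun γ => Matrix.of (fun i j => (⟨(f γ : Matrix (Fin n) (Fin n) R) i j, (hfH γ).1 i j⟩ : ↥R₀)) with hr
    set rinv : ∀ γ : Γ, Matrix (Fin n) (Fin n) ↥R₀ :=
      fun γ => Matrix.of (fun i j =>
        (⟨((f γ)⁻¹ : Matrix.GeneralLinearGroup (Fin n) R) i j, (hfH γ).2 i j⟩ : ↥R₀)) with hrinv
    have hre : ∀ γ, Mι (r γ) = (f γ : Matrix (Fin n) (Fin n) R) := by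
      intro γ; ext i j; rfl
    have hrinve : ∀ γ, Mι (rinv γ) = ((f γ)⁻¹ : Matrix.GeneralLinearGroup (Fin n) R) := by
      intro γ; ext i j; rfl
    set f₀ : Γ →* Matrix.GeneralLinearGroup (Fin n) ↥R₀ :=
      { toFun := fun γ =>
          { val := r γ
            inv := rinv γ
            val_inv := hMιinj (by
              rw [_root_.map_mul, hre, hrinve, _root_.map_one]
              exact (f γ).val_inv)
            inv_val := hMιinj (by
              rw [_root_.map_mul, hrinve, hre, _root_.map_one]
              exact (f γ).inv_val) }
        map_one' := by
          refine Units.ext (hMιinj ?_)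
          show Mι (r 1) = Mι 1
          rw [hre, _root_.map_one f, Units.val_one, _root_.map_one Mι]
        map_mul' := fun γ δ => by
          refine Units.ext (hMιinj ?_)
          show Mι (r (γ * δ)) = Mι (r γ * r δ)
          rw [_root_.map_mul Mι, hre, hre, hre, _root_.map_mul f, Units.val_mul] } with hf₀
    refine ⟨f₀, ?_⟩
    -- infinite image
    have hcomp : ∀ γ : Γ, (Units.map Mι.toMonoidHom) (f₀ γ) = f γ := by
      intro γ
      refine Units.ext ?_
      show Mι (r γ) = _
      exact hre γ
    by_contra hfin
    rw [not_infinite_iff_finite] at hfin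
    have h1 : ((f₀.range : Set (Matrix.GeneralLinearGroup (Fin n) ↥R₀))).Finite :=
      @Set.toFinite _ _ hfin
    have h2 : (Set.range f).Finite := by
      have : Set.range f ⊆ (Units.map Mι.toMonoidHom) '' (f₀.range : Set _) := by
        rintro u ⟨γ, rfl⟩
        exact ⟨f₀ γ, ⟨γ, rfl⟩, hcomp γ⟩
      exact (h1.image _).subset this
    have h3 : ((f.range : Set (Matrix.GeneralLinearGroup (Fin n) R))).Infinite :=
      Set.infinite_coe_iff.mp hf
    rw [MonoidHom.coe_range] at h3
    exact h3 h2


open Matrix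

/-- Over a reduced Noetherian ring, an infinite matrix group image survives in `GL_n` of
the fraction field of one of the (finitely many) minimal primes. -/
lemma exists_field_rep_of_reduced {Γ : Type} [Group Γ] {n : ℕ} {R : Type} [CommRing R]
    [IsNoetherianRing R] [IsReduced R] (g : Γ →* Matrix.GeneralLinearGroup (Fin n) R)
    (hg : Infinite ↥g.range) :
    ∃ (K : Type) (_ : Field K), ∃ h : Γ →* Matrix.GeneralLinearGroup (Fin n) K,
      Infinite ↥h.range := by
  classical
  by_contra hcon
  push_neg at hcon
  -- for each minimal prime, the image in GL_n of the fraction field of R/p is finite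
  have hmpfin : (minimalPrimes R).Finite := minimalPrimes.finite_of_isNoetherianRing R
  have hprime : ∀ p ∈ minimalPrimes R, p.IsPrime := fun p hp => hp.1.1
  -- the maps
  set ψ : ∀ p : ↥(minimalPrimes R), R →+* FractionRing (R ⧸ (p : Ideal R)) := fun p =>
    haveI := hprime p p.2
    ((algebraMap (R ⧸ (p : Ideal R)) (FractionRing (R ⧸ (p : Ideal R)))).comp
      (Ideal.Quotient.mk (p : Ideal R))) with hψ
  have hker : ∀ (x : R), (∀ p : ↥(minimalPrimes R), ψ p x = 0) → x = 0 := by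
    intro x hx
    have hnil : x ∈ nilradical R := by
      rw [nilradical_eq_sInf]
      refine Ideal.mem_sInf.mpr ?_
      intro q hq
      haveI : q.IsPrime := hq
      obtain ⟨p, hp, hpq⟩ := Ideal.exists_minimalPrimes_le (bot_le : ⊥ ≤ q)
      have hxp : x ∈ p := by
        haveI := hprime p hp
        have := hx ⟨p, hp⟩
        rw [hψ] at this
        simp only [RingHom.comp_apply] at this
        have h0 : (Ideal.Quotient.mk p) x = 0 := by
          apply IsFractionRing.injective (R ⧸ p) (FractionRing (R ⧸ p))
          rw [this, map_zero]
        exact (Ideal.Quotient.eq_zero_iff_mem).mp h0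
      exact hpq hxp
    rw [nilradical_eq_zero] at hnil
    exact hnil
  -- each composed representation has finite range
  have hfin : ∀ p : ↥(minimalPrimes R), Finite
      ↥((Matrix.GeneralLinearGroup.map (ψ p)).comp g).range := by
    intro p
    haveI := hprime p p.2
    rw [← not_infinite_iff_finite]
    exact fun h => @not_finite _ h (hcon (FractionRing (R ⧸ (p : Ideal R))) inferInstance
      ((Matrix.GeneralLinearGroup.map (ψ p)).comp g))
  -- build an injection from the range of g into the product of the finite ranges
  haveI : Finite ↥(minimalPrimes R) := hmpfin
  haveI : ∀ p : ↥(minimalPrimes R), Finite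
      ↥((Matrix.GeneralLinearGroup.map (ψ p)).comp g).range := hfin
  have hinj : Function.Injective (fun u : ↥g.range =>
      (fun p : ↥(minimalPrimes R) =>
        (⟨(Matrix.GeneralLinearGroup.map (ψ p)) u.1, by
          obtain ⟨γ, hγ⟩ := u.2
          exact ⟨γ, by rw [MonoidHom.comp_apply, hγ]⟩⟩ :
          ↥((Matrix.GeneralLinearGroup.map (ψ p)).comp g).range))) := by
    intro u v huv
    refine Subtype.ext (Units.ext ?_)
    ext i j
    have hentry : ∀ p : ↥(minimalPrimes R),
        ψ p ((u.1 : Matrix (Fin n) (Fin n) R) i j) = ψ p ((v.1 : Matrix (Fin n) (Fin n) R) i j) := by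
      intro p
      have h1 := congrArg Subtype.val (congrFun huv p)
      have h2 := congrArg Units.val h1
      exact congrFun (congrFun h2 i) j
    have : ∀ p : ↥(minimalPrimes R),
        ψ p ((u.1 : Matrix (Fin n) (Fin n) R) i j - (v.1 : Matrix (Fin n) (Fin n) R) i j) = 0 := by
      intro p
      rw [map_sub, hentry p, sub_self]
    have := hker _ this
    exact sub_eq_zero.mp this
  haveI := Finite.of_injective _ hinj
  exact not_finite ↥g.range


open Matrix

section MainForward

variable {Γ : Type} [Group Γ]

/-- The congruence subgroups of level the powers of an ideal. -/
def congrSubgroup {n : ℕ} {R : Type} [CommRing R] (I : Ideal R) :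
    Subgroup (Matrix.GeneralLinearGroup (Fin n) R) where
  carrier := {g | ∀ i j, ((g : Matrix (Fin n) (Fin n) R) - 1) i j ∈ I}
  one_mem' := by
    intro i j
    rw [Units.val_one, sub_self, Matrix.zero_apply]
    exact zero_mem I
  mul_mem' := by
    intro g h hg hh i j
    have hid : ((g * h : (Matrix (Fin n) (Fin n) R)ˣ) : Matrix (Fin n) (Fin n) R) - 1 =
        ((g : Matrix (Fin n) (Fin n) R) - 1) * ((h : Matrix (Fin n) (Fin n) R) - 1) +
        (((g : Matrix (Fin n) (Fin n) R) - 1) + ((h : Matrix (Fin n) (Fin n) R) - 1)) := by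
      rw [Units.val_mul]
      noncomm_ring
    rw [hid, Matrix.add_apply, Matrix.add_apply, Matrix.mul_apply]
    refine add_mem (Ideal.sum_mem I (fun k _ => Ideal.mul_mem_right _ I (hg i k)))
      (add_mem (hg i j) (hh i j))
  inv_mem' := by
    intro g hg i j
    have hid : ((g⁻¹ : (Matrix (Fin n) (Fin n) R)ˣ) : Matrix (Fin n) (Fin n) R) - 1 =
        ((g⁻¹ : (Matrix (Fin n) (Fin n) R)ˣ) : Matrix (Fin n) (Fin n) R) *
          (1 - (g : Matrix (Fin n) (Fin n) R)) := by
      rw [mul_sub, mul_one, Units.inv_mul]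
    rw [hid, Matrix.mul_apply]
    refine Ideal.sum_mem I (fun k _ => Ideal.mul_mem_left _ _ ?_)
    rw [show (1 - (g : Matrix (Fin n) (Fin n) R)) = -((g : Matrix (Fin n) (Fin n) R) - 1) from
      (neg_sub _ _).symm, Matrix.neg_apply]
    exact neg_mem (hg k j)

lemma mem_congrSubgroup {n : ℕ} {R : Type} [CommRing R] (I : Ideal R)
    (g : Matrix.GeneralLinearGroup (Fin n) R) :
    g ∈ congrSubgroup I ↔ ∀ i j, ((g : Matrix (Fin n) (Fin n) R) - 1) i j ∈ I := Iff.rfl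

/-- The main forward direction: a finitely generated group with an infinite image in
`GL_n` over a Noetherian commutative ring has an infinite image in `GL_m` over a field. -/
lemma exists_field_of_noetherian (Γ : Type) [Group Γ] [Group.FG Γ] {n : ℕ} (hn : 1 ≤ n)
    {R : Type} [CommRing R] [IsNoetherianRing R]
    (f : Γ →* Matrix.GeneralLinearGroup (Fin n) R) (hf : Infinite ↥f.range) :
    ∃ (K : Type) (_ : Field K) (m : ℕ), 1 ≤ m ∧
      ∃ h : Γ →* Matrix.GeneralLinearGroup (Fin m) K, Infinite ↥h.range := by
  classical
  set N : Ideal R := nilradical R with hN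
  obtain ⟨k, hk⟩ : IsNilpotent N := IsNoetherianRing.isNilpotent_nilradical R
  have hk' : N ^ (k + 1) = 0 := by rw [pow_succ, hk, zero_mul]
  -- the congruence subgroups in Γ
  set Δ : ℕ → Subgroup Γ := fun j => (congrSubgroup (I := N ^ j)).comap f with hΔ
  have hmemΔ : ∀ (j : ℕ) (γ : Γ), γ ∈ Δ j ↔
      ∀ i i', ((f γ : Matrix (Fin n) (Fin n) R) - 1) i i' ∈ N ^ j := fun j γ => Iff.rfl
  -- reduction mod the nilradical
  set Θ : Γ →* Matrix.GeneralLinearGroup (Fin n) (R ⧸ N) :=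
    (Matrix.GeneralLinearGroup.map (Ideal.Quotient.mk N)).comp f with hΘ
  have hkerΘ : Θ.ker = Δ 1 := by
    ext γ
    rw [MonoidHom.mem_ker, hmemΔ]
    have hone' : ∀ i i' : Fin n, (1 : Matrix (Fin n) (Fin n) (R ⧸ N)) i i'
        = Ideal.Quotient.mk N ((1 : Matrix (Fin n) (Fin n) R) i i') := by
      intro i i'
      by_cases h : i = i' <;> simp [Matrix.one_apply, h]
    constructor
    · intro h i i'
      rw [pow_one, Matrix.sub_apply, ← Ideal.Quotient.mk_eq_mk_iff_sub_mem]
      have h2 : (Ideal.Quotient.mk N) ((f γ : Matrix (Fin n) (Fin n) R) i i')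
          = (1 : Matrix (Fin n) (Fin n) (R ⧸ N)) i i' := by
        have h1 := congrArg Units.val h
        calc (Ideal.Quotient.mk N) ((f γ : Matrix (Fin n) (Fin n) R) i i')
            = (Θ γ : Matrix (Fin n) (Fin n) (R ⧸ N)) i i' := rfl
          _ = ((1 : Matrix.GeneralLinearGroup (Fin n) (R ⧸ N)) :
              Matrix (Fin n) (Fin n) (R ⧸ N)) i i' := by rw [h1]
          _ = (1 : Matrix (Fin n) (Fin n) (R ⧸ N)) i i' := by rw [Units.val_one]
      rw [hone'] at h2
      exact h2
    · intro h
      refine Units.ext ?_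
      ext i i'
      have h1 := h i i'
      rw [pow_one, Matrix.sub_apply, ← Ideal.Quotient.mk_eq_mk_iff_sub_mem] at h1
      show (Ideal.Quotient.mk N) ((f γ : Matrix (Fin n) (Fin n) R) i i') = _
      rw [h1, Units.val_one, hone']
  -- the additive homomorphisms on congruence levels
  have keymul : ∀ (j : ℕ), 1 ≤ j → ∀ (γ δ : Γ), γ ∈ Δ j → δ ∈ Δ j → ∀ i i',
      ((((f γ : Matrix (Fin n) (Fin n) R) - 1) *
        ((f δ : Matrix (Fin n) (Fin n) R) - 1)) i i') ∈ N ^ (j + 1) := by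
    intro j hj γ δ hγ hδ i i'
    rw [Matrix.mul_apply]
    refine Ideal.sum_mem _ (fun l _ => ?_)
    have h1 := (hmemΔ j γ).mp hγ i l
    have h2 := (hmemΔ j δ).mp hδ l i'
    have h3 : _ ∈ N ^ j * N ^ j := Ideal.mul_mem_mul h1 h2
    rw [← pow_add] at h3
    exact Ideal.pow_le_pow_right (by omega) h3
  set φ : ∀ (j : ℕ), 1 ≤ j →
      (↥(Δ j) →* Multiplicative (Matrix (Fin n) (Fin n) (R ⧸ N ^ (j + 1)))) :=
    fun j hj =>
      { toFun := fun γ => Multiplicative.ofAdd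
          (((Ideal.Quotient.mk (N ^ (j + 1))).mapMatrix)
            ((f γ.1 : Matrix (Fin n) (Fin n) R) - 1))
        map_one' := by simp
        map_mul' := by
          intro γ δ
          have hid : ((f (γ.1 * δ.1) : Matrix (Fin n) (Fin n) R) - 1) =
          ((f γ.1 : Matrix (Fin n) (Fin n) R) - 1) * ((f δ.1 : Matrix (Fin n) (Fin n) R) - 1) +
          (((f γ.1 : Matrix (Fin n) (Fin n) R) - 1) +
            ((f δ.1 : Matrix (Fin n) (Fin n) R) - 1)) := by
            rw [_root_.map_mul f, Units.val_mul]
            noncomm_ring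
          have hzero : ((Ideal.Quotient.mk (N ^ (j + 1))).mapMatrix)
              (((f γ.1 : Matrix (Fin n) (Fin n) R) - 1) *
                ((f δ.1 : Matrix (Fin n) (Fin n) R) - 1)) = 0 := by
            ext i i'
            rw [RingHom.mapMatrix_apply, Matrix.map_apply, Matrix.zero_apply,
              Ideal.Quotient.eq_zero_iff_mem]
            exact keymul j hj γ.1 δ.1 γ.2 δ.2 i i'
          show Multiplicative.ofAdd (((Ideal.Quotient.mk (N ^ (j + 1))).mapMatrix)
              ((f ((γ * δ : ↥(Δ j)) : Γ) : Matrix (Fin n) (Fin n) R) - 1))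
            = Multiplicative.ofAdd (((Ideal.Quotient.mk (N ^ (j + 1))).mapMatrix)
              ((f γ.1 : Matrix (Fin n) (Fin n) R) - 1))
            * Multiplicative.ofAdd (((Ideal.Quotient.mk (N ^ (j + 1))).mapMatrix)
              ((f δ.1 : Matrix (Fin n) (Fin n) R) - 1))
          rw [← ofAdd_add]
          congr 1
          rw [show ((γ * δ : ↥(Δ j)) : Γ) = γ.1 * δ.1 from rfl, hid, map_add, map_add, hzero,
            zero_add] } with hφ
  -- by induction: either we find a field representation, or `Δ j` has finite index
  have aux : ∀ j : ℕ, 1 ≤ j →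
      ((∃ (K : Type) (_ : Field K) (m : ℕ), 1 ≤ m ∧
        ∃ h : Γ →* Matrix.GeneralLinearGroup (Fin m) K, Infinite ↥h.range) ∨
        (Δ j).FiniteIndex) := by
    intro j hj
    induction j, hj using Nat.le_induction with
    | base =>
      by_cases hinf : Infinite ↥Θ.range
      · left
        haveI : IsReduced (R ⧸ N) :=
          (Ideal.isRadical_iff_quotient_reduced N).mp (Ideal.radical_isRadical (0 : Ideal R))
        obtain ⟨K, hK, h, hinf'⟩ := exists_field_rep_of_reduced Θ hinf
        exact ⟨K, hK, n, hn, h, hinf'⟩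
      · right
        rw [not_infinite_iff_finite] at hinf
        refine ⟨?_⟩
        rw [← hkerΘ, Subgroup.index_ker]
        exact Nat.card_ne_zero.mpr ⟨⟨1, 1, map_one Θ⟩, hinf⟩
    | succ j hj IH =>
      rcases IH with IH | IH
      · exact Or.inl IH
      haveI := IH
      by_cases hinf : Infinite ↥(φ j hj).range
      · left
        haveI : Group.FG ↥(Δ j) := Subgroup.fg_of_index_ne_zero _
        obtain ⟨ψ, hψ⟩ := CommGroup.exists_monoidHom_units_rat_infinite_range ↥(φ j hj).range
        set ρ : ↥(Δ j) →* ℚˣ := ψ.comp (φ j hj).rangeRestrict with hρ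
        have hρr : ρ.range = ψ.range := by
          rw [hρ, MonoidHom.range_comp, MonoidHom.range_eq_top.mpr
            (φ j hj).rangeRestrict_surjective, ← MonoidHom.range_eq_map]
        have hρinf : Infinite ↥ρ.range := by rw [hρr]; exact hψ
        obtain ⟨m, hm, π, hπ⟩ := exists_glq_of_finiteIndex_units (Δ j) ρ hρinf
        exact ⟨ℚ, inferInstance, m, hm, π, hπ⟩
      · right
        rw [not_infinite_iff_finite] at hinf
        have hle : Δ (j + 1) ≤ Δ j := by
          intro γ hγ
          rw [hmemΔ] at hγ ⊢
          exact fun i i' => Ideal.pow_le_pow_right (by omega) (hγ i i')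
        have hkerφ : (Δ (j + 1)).subgroupOf (Δ j) = (φ j hj).ker := by
          ext γ
          rw [Subgroup.mem_subgroupOf, MonoidHom.mem_ker, hmemΔ]
          constructor
          · intro h
            have hz : ((Ideal.Quotient.mk (N ^ (j + 1))).mapMatrix)
                ((f γ.1 : Matrix (Fin n) (Fin n) R) - 1) = 0 := by
              ext i i'
              rw [RingHom.mapMatrix_apply, Matrix.map_apply, Matrix.zero_apply,
                Ideal.Quotient.eq_zero_iff_mem]
              exact h i i'
            show Multiplicative.ofAdd (((Ideal.Quotient.mk (N ^ (j + 1))).mapMatrix)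
                ((f γ.1 : Matrix (Fin n) (Fin n) R) - 1)) = 1
            rw [hz]
            rfl
          · intro h i i'
            have h1 : ((Ideal.Quotient.mk (N ^ (j + 1))).mapMatrix)
                ((f γ.1 : Matrix (Fin n) (Fin n) R) - 1) = 0 := h
            have h2 := congrFun (congrFun (congrArg (fun M => (M : Fin n → Fin n → _)) h1) i) i'
            rw [← Ideal.Quotient.eq_zero_iff_mem]
            exact h2
        refine ⟨?_⟩
        rw [← Subgroup.relIndex_mul_index hle]
        refine Nat.mul_ne_zero ?_ IH.index_ne_zero
        rw [Subgroup.relIndex, hkerφ, Subgroup.index_ker]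
        exact Nat.card_ne_zero.mpr ⟨⟨1, 1, map_one _⟩, hinf⟩
  rcases aux (k + 1) (by omega) with h | h
  · exact h
  -- otherwise the kernel of f has finite index, contradicting the infinite image
  exfalso
  have hle : Δ (k + 1) ≤ f.ker := by
    intro γ hγ
    rw [hmemΔ] at hγ
    rw [MonoidHom.mem_ker]
    refine Units.ext ?_
    ext i i'
    have h1 := hγ i i'
    rw [hk'] at h1
    rw [Ideal.zero_eq_bot, Ideal.mem_bot, Matrix.sub_apply, sub_eq_zero] at h1
    rw [h1, Units.val_one]
  haveI : f.ker.FiniteIndex := Subgroup.finiteIndex_of_le hle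
  have h2 : Nat.card ↥f.range ≠ 0 := by
    rw [← Subgroup.index_ker]
    exact Subgroup.FiniteIndex.index_ne_zero
  haveI : Finite ↥f.range := (Nat.card_ne_zero.mp h2).2
  exact not_finite ↥f.range

end MainForward

/-- For a finitely generated group `Γ`, there exist a commutative unital ring `R`, an
integer `n ≥ 1` and a homomorphism `Γ → GL_n(R)` with infinite image if and only if there
exist a field `K`, an integer `n ≥ 1` and a homomorphism `Γ → GL_n(K)` with infinite image. -/
theorem ringLinear_iff_fieldLinear_infiniteImage (Γ : Type) [Group Γ] [Group.FG Γ] :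
    (∃ (R : Type) (_ : CommRing R) (n : ℕ), 1 ≤ n ∧
      ∃ f : Γ →* Matrix.GeneralLinearGroup (Fin n) R, Infinite ↥f.range) ↔
    (∃ (K : Type) (_ : Field K) (n : ℕ), 1 ≤ n ∧
      ∃ f : Γ →* Matrix.GeneralLinearGroup (Fin n) K, Infinite ↥f.range) := by
  constructor
  · rintro ⟨R, _, n, hn, f, hf⟩
    obtain ⟨R₀, _, _, f₀, hf₀⟩ := exists_noetherian_ring_rep Γ f hf
    exact exists_field_of_noetherian Γ hn f₀ hf₀
  · rintro ⟨K, _, n, hn, f, hf⟩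
    exact ⟨K, inferInstance, n, hn, f, hf⟩
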